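/- Expanding the multilinear functional: for a bounded symmetric function u of j variables and finite signed measures Λ, ν, one has ∫ u d(Λ+ν)^{⊗j} − ∫ u dΛ^{⊗j} = j ∫_{ℝ^j} u(x, x_1,...,x_{j−1}) ν(dx) Λ(dx_1)⋯Λ(dx_{j−1}) + R, where |R| ≤ C ‖ν‖^2 for a constant C depending only on ‖u‖_∞, j, ‖Λ‖ and ‖ν‖ bounded. -/

import Mathlib

open MeasureTheory

/-- Total variation norm on the space of finite signed Borel measures on `ℝ`. -/
noncomputable def tvNorm (ν : SignedMeasure ℝ) : ℝ := (ν.totalVariation Set.univ).toReal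

/-- Integral of a function against a finite signed measure, via its Jordan decomposition. -/
noncomputable def signedIntegral (f : ℝ → ℝ) (ν : SignedMeasure ℝ) : ℝ :=
  (∫ x, f x ∂ν.toJordanDecomposition.posPart) - ∫ x, f x ∂ν.toJordanDecomposition.negPart

/-- The `j`-fold product integral `∫ u d(p - q)^{⊗j}` of `u` against the `j`-fold product
of the signed measure `p - q`, expanded by multilinearity over sign patterns. -/
noncomputable def prodIntegralDiff (j : ℕ) (u : (Fin j → ℝ) → ℝ) (p q : Measure ℝ) : ℝ :=
  ∑ s : Fin j → Bool,
    (-1 : ℝ) ^ (Finset.univ.filter fun i => s i = false).card *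
      ∫ x : Fin j → ℝ, u x ∂(Measure.pi fun i => if s i then p else q)


section Aux
variable {j : ℕ}

lemma myIntegrable_of_abs_le {α : Type*} [MeasurableSpace α] (μ : Measure α) [IsFiniteMeasure μ]
    {f : α → ℝ} {B : ℝ} (hf : Measurable f) (h : ∀ x, |f x| ≤ B) : Integrable f μ :=
  ⟨hf.aestronglyMeasurable,
    HasFiniteIntegral.of_bounded (C := B) (Filter.Eventually.of_forall fun x => by
      simpa using h x)⟩

lemma myPi_sum (μ ν : Fin j → Measure ℝ) [∀ i, IsFiniteMeasure (μ i)]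
    [∀ i, IsFiniteMeasure (ν i)] :
    Measure.pi (fun i => μ i + ν i)
      = ∑ b : Fin j → Bool, Measure.pi (fun i => if b i then μ i else ν i) := by
  haveI : ∀ (b : Fin j → Bool) (i : Fin j), SigmaFinite (if b i then μ i else ν i) := by
    intro b i; by_cases h : b i <;> simp [h] <;> infer_instance
  refine Measure.pi_eq fun s hs => ?_
  rw [Measure.finset_sum_apply]
  trans (∑ b : Fin j → Bool, ∏ i, (if b i then μ i else ν i) (s i))
  · exact Finset.sum_congr rfl fun b _ => Measure.pi_pi _ _
  · rw [← Fintype.prod_sum (fun i (b : Bool) => (if b then μ i else ν i) (s i))]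
    exact Finset.prod_congr rfl fun i _ => by simp [Fintype.sum_bool]

lemma myPi_eq_zero (μ : Fin j → Measure ℝ) [∀ i, SigmaFinite (μ i)] (i₀ : Fin j)
    (h : μ i₀ = 0) : Measure.pi μ = 0 := by
  refine Measure.measure_univ_eq_zero.mp ?_
  rw [Measure.pi_univ]
  exact Finset.prod_eq_zero (Finset.mem_univ i₀) (by simp [h])

lemma myIntegral_pi_perm {u : (Fin j → ℝ) → ℝ}
    (hsym : ∀ (σ : Equiv.Perm (Fin j)) x, u (x ∘ σ) = u x)
    (μ : Fin j → Measure ℝ) [∀ i, SigmaFinite (μ i)] (σ : Equiv.Perm (Fin j)) :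
    ∫ x, u x ∂Measure.pi (fun i => μ (σ i)) = ∫ x, u x ∂Measure.pi μ := by
  have h := (MeasureTheory.measurePreserving_piCongrLeft (α := fun _ : Fin j => ℝ) μ σ
    ).integral_comp' (g := u)
  rw [← h]
  refine integral_congr_ae (Filter.Eventually.of_forall fun x => ?_)
  have hx : (MeasurableEquiv.piCongrLeft (fun _ : Fin j => ℝ) σ) x = x ∘ σ.symm := by
    funext b
    have := Equiv.piCongrLeft_apply_apply (fun _ : Fin j => ℝ) σ x (σ.symm b)
    simpa [MeasurableEquiv.piCongrLeft] using this
  show u x = u ((MeasurableEquiv.piCongrLeft (fun _ : Fin j => ℝ) σ) x)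
  rw [hx, hsym σ.symm x]

lemma myAbs_integral_pi_le {u : (Fin j → ℝ) → ℝ} {B : ℝ}
    (hB : ∀ x, |u x| ≤ B) (μ : Fin j → Measure ℝ) [∀ i, IsFiniteMeasure (μ i)] :
    |∫ x, u x ∂Measure.pi μ| ≤ B * ∏ i, (μ i Set.univ).toReal := by
  have h := norm_integral_le_of_norm_le_const (μ := Measure.pi μ) (f := u) (C := B)
    (Filter.Eventually.of_forall fun x => by simpa using hB x)
  rw [measureReal_def, Measure.pi_univ, ENNReal.toReal_prod] at h
  simpa using h

lemma myIntegral_pi_cons {n : ℕ} {u : (Fin (n+1) → ℝ) → ℝ} {B : ℝ}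
    (hu : Measurable u) (hB : ∀ x, |u x| ≤ B)
    (Λ : Measure ℝ) [IsFiniteMeasure Λ] (ρ : Measure ℝ) [IsFiniteMeasure ρ] :
    ∫ x, u x ∂Measure.pi (Function.update (fun _ : Fin (n+1) => Λ) 0 ρ)
      = ∫ x, (∫ z : Fin n → ℝ, u (Fin.cons x z) ∂Measure.pi (fun _ => Λ)) ∂ρ := by
  set μ : Fin (n+1) → Measure ℝ := Function.update (fun _ : Fin (n+1) => Λ) 0 ρ with hμ
  haveI hfin : ∀ i, IsFiniteMeasure (μ i) := by
    intro i; rcases eq_or_ne i 0 with h | h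
    · rw [hμ, h, Function.update_self]; infer_instance
    · rw [hμ, Function.update_of_ne h]; infer_instance
  have hmp := MeasureTheory.measurePreserving_piFinSuccAbove μ 0
  have h0 : μ 0 = ρ := Function.update_self _ _ _
  have hs : (fun k => μ ((0 : Fin (n+1)).succAbove k)) = fun _ : Fin n => Λ := by
    funext k
    have hk : (0 : Fin (n+1)).succAbove k = k.succ := rfl
    rw [hk]; exact Function.update_of_ne (Fin.succ_ne_zero k) _ _
  rw [h0, hs] at hmp
  set e := MeasurableEquiv.piFinSuccAbove (fun _ : Fin (n+1) => ℝ) 0 with he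
  have h1 := hmp.integral_comp' (g := fun p : ℝ × (Fin n → ℝ) => u (e.symm p))
  simp only [MeasurableEquiv.symm_apply_apply] at h1
  rw [h1, integral_prod]
  · have heq : ∀ (x : ℝ) (z : Fin n → ℝ), e.symm (x, z) = Fin.cons x z := by
      intro x z
      show (Fin.insertNthEquiv (fun _ : Fin (n+1) => ℝ) 0) (x, z) = Fin.cons x z
      simp [Fin.insertNthEquiv, Fin.insertNth_zero']
    refine integral_congr_ae (Filter.Eventually.of_forall fun x => ?_)
    refine integral_congr_ae (Filter.Eventually.of_forall fun z => ?_)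
    show u (e.symm (x, z)) = u (Fin.cons x z)
    rw [heq]
  · exact myIntegrable_of_abs_le _ (hu.comp e.symm.measurable) (fun p => hB _)

lemma myIntegral_pi_update {n : ℕ} {u : (Fin (n+1) → ℝ) → ℝ} {B : ℝ}
    (hu : Measurable u) (hB : ∀ x, |u x| ≤ B)
    (hsym : ∀ (σ : Equiv.Perm (Fin (n+1))) x, u (x ∘ σ) = u x)
    (Λ : Measure ℝ) [IsFiniteMeasure Λ] (ρ : Measure ℝ) [IsFiniteMeasure ρ] (i₀ : Fin (n+1)) :
    ∫ x, u x ∂Measure.pi (Function.update (fun _ : Fin (n+1) => Λ) i₀ ρ)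
      = ∫ x, (∫ z : Fin n → ℝ, u (Fin.cons x z) ∂Measure.pi (fun _ => Λ)) ∂ρ := by
  set μ : Fin (n+1) → Measure ℝ := Function.update (fun _ : Fin (n+1) => Λ) i₀ ρ with hμ
  haveI hfin : ∀ i, IsFiniteMeasure (μ i) := by
    intro i; rcases eq_or_ne i i₀ with h | h
    · rw [hμ, h, Function.update_self]; infer_instance
    · rw [hμ, Function.update_of_ne h]; infer_instance
  have hperm : (fun i => μ (Equiv.swap 0 i₀ i)) = Function.update (fun _ : Fin (n+1) => Λ) 0 ρ := by
    funext i
    rcases eq_or_ne i 0 with rfl | h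
    · simp [hμ, Equiv.swap_apply_left]
    · have h2 : Equiv.swap 0 i₀ i ≠ i₀ := by
        intro hc
        have := congrArg (Equiv.swap 0 i₀) hc
        rw [Equiv.swap_apply_self, Equiv.swap_apply_right] at this
        exact h this
      rw [hμ, Function.update_of_ne h2, Function.update_of_ne h]
  have := myIntegral_pi_perm hsym μ (Equiv.swap 0 i₀)
  rw [hperm] at this
  rw [← this, myIntegral_pi_cons hu hB Λ ρ]
end Aux

/-- Expansion of the multilinear functional: for a bounded symmetric `u` of `j = n+1`
variables and finite (signed) measures `Λ`, `ν`,
`∫ u d(Λ+ν)^{⊗j} - ∫ u dΛ^{⊗j} = j ∫ u(x,x_1,…,x_{j-1}) ν(dx) Λ(dx_1)⋯Λ(dx_{j-1}) + R`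
with `|R| ≤ C ‖ν‖²`, where the constant `C` depends only on `‖u‖_∞ ≤ B`, `j`, `‖Λ‖ ≤ K`
and the bound `‖ν‖ ≤ M`. -/
theorem multilinear_expansion_second_order_remainder
    (n : ℕ) (B K M : ℝ) (hB : 0 ≤ B) (hK : 0 ≤ K) (hM : 0 < M) :
    ∃ C : ℝ, ∀ (u : (Fin (n + 1) → ℝ) → ℝ), Measurable u → (∀ x, |u x| ≤ B) →
      (∀ (σ : Equiv.Perm (Fin (n + 1))) (x : Fin (n + 1) → ℝ), u (x ∘ σ) = u x) →
      ∀ (Λ : Measure ℝ) (_ : IsFiniteMeasure Λ), (Λ Set.univ).toReal ≤ K →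
      ∀ ν : SignedMeasure ℝ, tvNorm ν ≤ M →
        |prodIntegralDiff (n + 1) u (Λ + ν.toJordanDecomposition.posPart)
            ν.toJordanDecomposition.negPart -
          (∫ x : Fin (n + 1) → ℝ, u x ∂(Measure.pi fun _ => Λ)) -
          signedIntegral
            (fun x => (n + 1 : ℝ) *
              ∫ z : Fin n → ℝ, u (Fin.cons x z) ∂(Measure.pi fun _ => Λ)) ν| ≤
          C * tvNorm ν ^ 2 := by
  classical
  refine ⟨(4:ℝ)^(n+1) * B * (max K M + 1)^(n+1), ?_⟩
  intro u hu hB' hsym Λ hΛfin hΛK ν hνM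
  haveI := hΛfin
  set P := ν.toJordanDecomposition.posPart with hP
  set Q := ν.toJordanDecomposition.negPart with hQ
  set m := tvNorm ν with hm
  set L := max K M with hL
  have hm0 : 0 ≤ m := ENNReal.toReal_nonneg
  have hmPQ : (P Set.univ).toReal + (Q Set.univ).toReal = m := by
    rw [hm]; unfold tvNorm
    rw [SignedMeasure.totalVariation, Measure.add_apply,
      ENNReal.toReal_add (measure_ne_top _ _) (measure_ne_top _ _)]
  have hPm : (P Set.univ).toReal ≤ m := by
    have : (0:ℝ) ≤ (Q Set.univ).toReal := ENNReal.toReal_nonneg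
    linarith
  have hQm : (Q Set.univ).toReal ≤ m := by
    have : (0:ℝ) ≤ (P Set.univ).toReal := ENNReal.toReal_nonneg
    linarith
  set g : Bool × Bool → Measure ℝ :=
    fun c => if c.1 then (if c.2 then Λ else P) else (if c.2 then Q else 0) with hg
  haveI hgfin : ∀ c, IsFiniteMeasure (g c) := by
    rintro ⟨b1, b2⟩
    cases b1 <;> cases b2 <;> (rw [hg]; simp) <;> infer_instance
  haveI hgfin' : ∀ (c : Fin (n+1) → Bool × Bool) (i : Fin (n+1)), IsFiniteMeasure (g (c i)) :=
    fun c i => hgfin _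
  set T : (Fin (n+1) → Bool × Bool) → ℝ := fun c =>
    (-1 : ℝ) ^ (Finset.univ.filter fun i => (c i).1 = false).card *
      ∫ x : Fin (n+1) → ℝ, u x ∂(Measure.pi fun i => g (c i)) with hT
  have h1 : prodIntegralDiff (n+1) u (Λ + P) Q = ∑ c : Fin (n+1) → Bool × Bool, T c := by
    rw [prodIntegralDiff]
    have hsplit : ∀ s : Fin (n+1) → Bool,
        (∫ x, u x ∂(Measure.pi fun i => if s i then Λ + P else Q))
          = ∑ b : Fin (n+1) → Bool, ∫ x, u x ∂(Measure.pi fun i => g (s i, b i)) := by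
      intro s
      haveI i1 : ∀ i, IsFiniteMeasure (if s i then Λ else Q) := by
        intro i; by_cases h : s i <;> simp [h] <;> infer_instance
      haveI i2 : ∀ i, IsFiniteMeasure (if s i then P else (0 : Measure ℝ)) := by
        intro i; by_cases h : s i <;> simp [h] <;> infer_instance
      have e1 : (fun i => if s i then Λ + P else Q)
          = fun i => (if s i then Λ else Q) + (if s i then P else 0) := by
        funext i; by_cases h : s i <;> simp [h]
      rw [e1, myPi_sum]
      haveI i3 : ∀ (b : Fin (n+1) → Bool) (i : Fin (n+1)),
          IsFiniteMeasure (if b i then (if s i then Λ else Q) else (if s i then P else 0)) := by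
        intro b i; by_cases h : b i <;> simp [h] <;> infer_instance
      rw [integral_finset_sum_measure (fun b _ => myIntegrable_of_abs_le _ hu hB')]
      refine Finset.sum_congr rfl fun b _ => ?_
      have : (fun i => if b i then (if s i then Λ else Q) else (if s i then P else 0))
          = fun i => g (s i, b i) := by
        funext i
        cases hb : b i <;> cases hs : s i <;> simp [hg, hb, hs]
      rw [this]
    simp_rw [hsplit, Finset.mul_sum]
    rw [← Fintype.sum_prod_type']
    refine Fintype.sum_equiv (Equiv.arrowProdEquivProdArrow (Fin (n+1)) (fun _ => Bool) (fun _ => Bool)).symm _ _ ?_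
    intro p
    simp [Equiv.arrowProdEquivProdArrow, hT]
  set I : ℝ → ℝ := fun x => ∫ z : Fin n → ℝ, u (Fin.cons x z) ∂(Measure.pi fun _ => Λ) with hI
  have hTconst : T (fun _ => (true, true)) = ∫ x, u x ∂(Measure.pi fun _ : Fin (n+1) => Λ) := by
    rw [hT]
    simp [hg]
  have hmeasupd : ∀ (i₀ : Fin (n+1)) (v : Bool × Bool),
      (fun i => g (Function.update (fun _ => (true,true)) i₀ v i))
        = Function.update (fun _ : Fin (n+1) => Λ) i₀ (g v) := by
    intro i₀ v; funext i
    rcases eq_or_ne i i₀ with rfl | h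
    · simp
    · simp only [Function.update_of_ne h]
      simp [hg]
  have hsignupd : ∀ (i₀ : Fin (n+1)) (v : Bool × Bool),
      (Finset.univ.filter fun i =>
          (Function.update (fun _ => ((true,true) : Bool × Bool)) i₀ v i).1 = false)
        = if v.1 = false then {i₀} else ∅ := by
    intro i₀ v
    ext i
    rcases eq_or_ne i i₀ with rfl | h
    · by_cases hv : v.1 = false <;> simp [hv]
    · by_cases hv : v.1 = false <;> simp [Function.update_of_ne h, h, hv]
  have hT_PF : ∀ i₀ : Fin (n+1),
      T (Function.update (fun _ => (true,true)) i₀ (true, false)) = ∫ x, I x ∂P := by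
    intro i₀
    rw [hT]
    show (-1:ℝ) ^ _ * _ = _
    rw [hmeasupd, hsignupd]
    have hgv : g (true, false) = P := by simp [hg]
    rw [hgv]
    simp only [if_neg (by simp : ¬((true, false) : Bool × Bool).1 = false), Finset.card_empty,
      pow_zero, one_mul]
    exact myIntegral_pi_update hu hB' hsym Λ P i₀
  have hT_FT : ∀ i₀ : Fin (n+1),
      T (Function.update (fun _ => (true,true)) i₀ (false, true)) = -∫ x, I x ∂Q := by
    intro i₀
    rw [hT]
    show (-1:ℝ) ^ _ * _ = _
    rw [hmeasupd, hsignupd]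
    have hgv : g (false, true) = Q := by simp [hg]
    rw [hgv]
    have hset : (if (((false, true) : Bool × Bool).1 = false) then ({i₀} : Finset (Fin (n+1)))
        else ∅) = {i₀} := by simp
    rw [hset, Finset.card_singleton, pow_one, myIntegral_pi_update hu hB' hsym Λ Q i₀]
    ring
  have hT_FF : ∀ i₀ : Fin (n+1),
      T (Function.update (fun _ => (true,true)) i₀ (false, false)) = 0 := by
    intro i₀
    rw [hT]
    show (-1:ℝ) ^ _ * _ = 0
    rw [hmeasupd]
    have hgv : g (false, false) = 0 := by simp [hg]
    rw [hgv]
    have hzero : Measure.pi (Function.update (fun _ : Fin (n+1) => Λ) i₀ (0 : Measure ℝ)) = 0 := by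
      haveI : ∀ i, SigmaFinite (Function.update (fun _ : Fin (n+1) => Λ) i₀ (0 : Measure ℝ) i) := by
        intro i; rcases eq_or_ne i i₀ with rfl | h
        · rw [Function.update_self]; infer_instance
        · rw [Function.update_of_ne h]; infer_instance
      exact myPi_eq_zero _ i₀ (Function.update_self _ _ _)
    rw [hzero]
    simp
  set N : (Fin (n+1) → Bool × Bool) → Finset (Fin (n+1)) :=
    fun c => Finset.univ.filter fun i => c i ≠ (true,true) with hN
  set V : Finset (Bool × Bool) := {(true, false), (false, true), (false, false)} with hV
  set Φ : Fin (n+1) × (Bool × Bool) → (Fin (n+1) → Bool × Bool) :=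
    fun p => Function.update (fun _ => (true,true)) p.1 p.2 with hΦ
  have hVne : ∀ v ∈ V, v ≠ ((true,true) : Bool × Bool) := by
    intro v hv
    rw [hV] at hv
    simp only [Finset.mem_insert, Finset.mem_singleton] at hv
    rcases hv with rfl | rfl | rfl <;> decide
  have hNupd : ∀ (i₀ : Fin (n+1)) (v : Bool × Bool), v ≠ (true,true) →
      N (Function.update (fun _ => (true,true)) i₀ v) = {i₀} := by
    intro i₀ v hv
    rw [hN]
    ext i
    rcases eq_or_ne i i₀ with rfl | h
    · simp [hv]
    · simp [Function.update_of_ne h, h]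
  have hS1 : Finset.univ.filter (fun c => (N c).card = 1) = (Finset.univ ×ˢ V).image Φ := by
    ext c
    simp only [Finset.mem_filter, Finset.mem_image, Finset.mem_product, Finset.mem_univ, true_and]
    constructor
    · intro hc
      obtain ⟨i₀, hi₀⟩ := Finset.card_eq_one.mp hc
      have hmem : i₀ ∈ N c := hi₀ ▸ Finset.mem_singleton_self i₀
      have hne : c i₀ ≠ (true,true) := by
        rw [hN] at hmem
        exact (Finset.mem_filter.mp hmem).2
      refine ⟨(i₀, c i₀), ?_, ?_⟩
      · rw [hV]
        rcases hc0 : c i₀ with ⟨b1, b2⟩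
        rw [hc0] at hne
        cases b1 <;> cases b2 <;> simp_all
      · rw [hΦ]
        funext i
        rcases eq_or_ne i i₀ with rfl | h
        · simp
        · have hnotin : i ∉ N c := by rw [hi₀]; simp [h]
          rw [hN] at hnotin
          simp only [Finset.mem_filter, Finset.mem_univ, true_and, not_not] at hnotin
          simp [Function.update_of_ne h, hnotin]
    · rintro ⟨⟨i₀, v⟩, hv, rfl⟩
      rw [hΦ]
      rw [hNupd i₀ v (hVne v hv)]
      simp
  have hΦinj : ∀ p ∈ Finset.univ ×ˢ V, ∀ q ∈ Finset.univ ×ˢ V, Φ p = Φ q → p = q := by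
    rintro ⟨i₀, v⟩ hp ⟨i₁, w⟩ hq heq
    rw [Finset.mem_product] at hp hq
    have hvne := hVne v hp.2
    have hwne := hVne w hq.2
    rw [hΦ] at heq
    simp only [] at heq
    rcases eq_or_ne i₀ i₁ with rfl | h
    · have := congrFun heq i₀
      simp only [Function.update_self] at this
      rw [this]
    · have := congrFun heq i₀
      rw [Function.update_self, Function.update_of_ne h] at this
      exact absurd this hvne
  have hS1sum : ∑ c ∈ Finset.univ.filter (fun c => (N c).card = 1), T c
      = (n + 1 : ℝ) * ((∫ x, I x ∂P) - ∫ x, I x ∂Q) := by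
    rw [hS1, Finset.sum_image hΦinj, Finset.sum_product]
    have hinner : ∀ i₀ : Fin (n+1), ∑ v ∈ V, T (Φ (i₀, v))
        = (∫ x, I x ∂P) - ∫ x, I x ∂Q := by
      intro i₀
      rw [hV]
      rw [Finset.sum_insert (by decide), Finset.sum_insert (by decide), Finset.sum_singleton]
      rw [hΦ]
      simp only []
      rw [hT_PF i₀, hT_FT i₀, hT_FF i₀]
      ring
    simp_rw [hinner]
    rw [Finset.sum_const, Finset.card_univ, Fintype.card_fin, nsmul_eq_mul]
    push_cast
    ring
  have hfilter0 : Finset.univ.filter (fun c : Fin (n+1) → Bool × Bool => (N c).card = 0)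
      = {fun _ => (true,true)} := by
    ext c
    simp only [Finset.mem_filter, Finset.mem_univ, true_and, Finset.mem_singleton,
      Finset.card_eq_zero]
    constructor
    · intro hc
      funext i
      have hni : i ∉ N c := hc ▸ Finset.notMem_empty i
      rw [hN] at hni
      simpa using hni
    · rintro rfl
      rw [hN]; ext i; simp
  have hfilter1 : (Finset.univ.filter fun c : Fin (n+1) → Bool × Bool => ¬(N c).card = 0).filter
      (fun c => (N c).card = 1) = Finset.univ.filter (fun c => (N c).card = 1) := by
    rw [Finset.filter_filter]
    refine Finset.filter_congr fun c _ => ?_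
    constructor
    · rintro ⟨_, h⟩; exact h
    · intro h; exact ⟨by omega, h⟩
  set S2 := (Finset.univ.filter fun c : Fin (n+1) → Bool × Bool => ¬(N c).card = 0).filter
      (fun c => ¬(N c).card = 1) with hS2
  have htotal : ∑ c : Fin (n+1) → Bool × Bool, T c
      = T (fun _ => (true,true)) + ((n+1:ℝ) * ((∫ x, I x ∂P) - ∫ x, I x ∂Q)) + ∑ c ∈ S2, T c := by
    rw [← Finset.sum_filter_add_sum_filter_not Finset.univ (fun c => (N c).card = 0) T,
        ← Finset.sum_filter_add_sum_filter_not (Finset.univ.filter fun c => ¬(N c).card = 0)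
          (fun c => (N c).card = 1) T,
        hfilter0, Finset.sum_singleton, hfilter1, hS1sum]
    ring
  have hsigned : signedIntegral (fun x => (n + 1 : ℝ) * I x) ν
      = (n + 1 : ℝ) * ((∫ x, I x ∂P) - ∫ x, I x ∂Q) := by
    rw [signedIntegral]
    rw [integral_const_mul, integral_const_mul]
    ring
  have hL1 : (1:ℝ) ≤ L + 1 := by
    have := le_max_left K M
    rw [hL]; linarith
  have h0L1 : (0:ℝ) ≤ L + 1 := le_trans zero_le_one hL1
  have hmassle : ∀ v : Bool × Bool, ((g v) Set.univ).toReal ≤ L + 1 := by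
    rintro ⟨b1, b2⟩
    have h1 : K ≤ L := le_max_left K M
    have h2 : M ≤ L := le_max_right K M
    cases b1 <;> cases b2 <;> simp [hg] <;> linarith [hPm, hQm, hΛK, hνM, hm0]
  have hmassm : ∀ (c : Fin (n+1) → Bool × Bool) (i : Fin (n+1)), i ∈ N c →
      ((g (c i)) Set.univ).toReal ≤ m := by
    intro c i hi
    rw [hN] at hi
    have hne : c i ≠ (true,true) := (Finset.mem_filter.mp hi).2
    rcases hci : c i with ⟨b1, b2⟩
    rw [hci] at hne
    cases b1 <;> cases b2
    · simpa [hg] using hm0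
    · simpa [hg] using hQm
    · simpa [hg] using hPm
    · exact absurd rfl hne
  have hterm : ∀ c ∈ S2, |T c| ≤ B * ((L+1)^(n+1) * (m*m)) := by
    intro c hc
    rw [hS2] at hc
    simp only [Finset.mem_filter, Finset.mem_univ, true_and] at hc
    have h2 : 1 < (N c).card := by omega
    obtain ⟨a, ha, b, hb, hab⟩ := Finset.one_lt_card.mp h2
    have hsub : ({a, b} : Finset (Fin (n+1))) ⊆ Finset.univ := Finset.subset_univ _
    have hprodsplit := Finset.prod_sdiff (f := fun i => ((g (c i)) Set.univ).toReal) hsub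
    have hpair : ∏ i ∈ ({a, b} : Finset (Fin (n+1))), ((g (c i)) Set.univ).toReal
        = ((g (c a)) Set.univ).toReal * ((g (c b)) Set.univ).toReal := Finset.prod_pair hab
    have h1le : ∏ i ∈ Finset.univ \ ({a,b} : Finset (Fin (n+1))), ((g (c i)) Set.univ).toReal
        ≤ (L+1)^(n+1) := by
      calc ∏ i ∈ Finset.univ \ ({a,b} : Finset (Fin (n+1))), ((g (c i)) Set.univ).toReal
          ≤ ∏ _i ∈ Finset.univ \ ({a,b} : Finset (Fin (n+1))), (L+1) :=
            Finset.prod_le_prod (fun i _ => ENNReal.toReal_nonneg) (fun i _ => hmassle (c i))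
        _ = (L+1) ^ (Finset.univ \ ({a,b} : Finset (Fin (n+1)))).card := Finset.prod_const _
        _ ≤ (L+1) ^ (n+1) := by
            apply pow_le_pow_right₀ hL1
            calc (Finset.univ \ ({a,b} : Finset (Fin (n+1)))).card
                ≤ (Finset.univ : Finset (Fin (n+1))).card :=
                  Finset.card_le_card (Finset.sdiff_subset)
              _ = n+1 := by simp
    have hprodle : (∏ i, ((g (c i)) Set.univ).toReal) ≤ (L+1)^(n+1) * (m*m) := by
      rw [← hprodsplit, hpair]
      have hmm := mul_le_mul (hmassm c a ha) (hmassm c b hb) ENNReal.toReal_nonneg hm0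
      refine mul_le_mul h1le hmm ?_ ?_
      · positivity
      · exact pow_nonneg h0L1 _
    have habs : |T c| = |∫ x, u x ∂(Measure.pi fun i => g (c i))| := by
      rw [hT]
      show |(-1:ℝ) ^ _ * _| = _
      rw [abs_mul, abs_pow, abs_neg, abs_one, one_pow, one_mul]
    rw [habs]
    calc |∫ x, u x ∂(Measure.pi fun i => g (c i))| ≤ B * ∏ i, ((g (c i)) Set.univ).toReal :=
        myAbs_integral_pi_le hB' _
      _ ≤ B * ((L+1)^(n+1) * (m*m)) := mul_le_mul_of_nonneg_left hprodle hB
  have hbnd0 : (0:ℝ) ≤ B * ((L+1)^(n+1) * (m*m)) :=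
    mul_nonneg hB (mul_nonneg (pow_nonneg h0L1 _) (mul_nonneg hm0 hm0))
  have hfinal : |∑ c ∈ S2, T c| ≤ (4:ℝ)^(n+1) * B * (L+1)^(n+1) * m^2 := by
    calc |∑ c ∈ S2, T c| ≤ ∑ c ∈ S2, |T c| := Finset.abs_sum_le_sum_abs _ _
      _ ≤ S2.card • (B * ((L+1)^(n+1) * (m*m))) := Finset.sum_le_card_nsmul _ _ _ hterm
      _ = (S2.card : ℝ) * (B * ((L+1)^(n+1) * (m*m))) := nsmul_eq_mul _ _
      _ ≤ (4:ℝ)^(n+1) * (B * ((L+1)^(n+1) * (m*m))) := by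
          refine mul_le_mul_of_nonneg_right ?_ hbnd0
          have hcard : S2.card ≤ 4^(n+1) := by
            calc S2.card ≤ Fintype.card (Fin (n+1) → Bool × Bool) := Finset.card_le_univ _
              _ = 4^(n+1) := by simp
          exact_mod_cast hcard
      _ = (4:ℝ)^(n+1) * B * (L+1)^(n+1) * m^2 := by ring
  have hcollapse : prodIntegralDiff (n+1) u (Λ + P) Q
      - (∫ x, u x ∂(Measure.pi fun _ : Fin (n+1) => Λ))
      - signedIntegral (fun x => (n + 1 : ℝ) * I x) ν = ∑ c ∈ S2, T c := by
    rw [h1, htotal, hTconst, hsigned]; ring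
  have hgoal : prodIntegralDiff (n+1) u (Λ + P) Q
      - (∫ x : Fin (n+1) → ℝ, u x ∂(Measure.pi fun _ => Λ))
      - signedIntegral (fun x => (n + 1 : ℝ) *
          ∫ z : Fin n → ℝ, u (Fin.cons x z) ∂(Measure.pi fun _ => Λ)) ν
      = ∑ c ∈ S2, T c := hcollapse
  rw [hgoal]
  calc |∑ c ∈ S2, T c| ≤ (4:ℝ)^(n+1) * B * (L+1)^(n+1) * m^2 := hfinal
    _ = (4:ℝ)^(n+1) * B * (max K M + 1)^(n+1) * tvNorm ν ^ 2 := by rw [hL, hm]
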